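/- Let N be a phylogenetic network consistent with a dense triplet set T. Then for each cut-arc a of N, the set S of leaves below a is an SN-set of T. -/

import Mathlib

namespace Phylo

variable {V : Type*}

/-- In-degree of a vertex in a directed graph given by relation `R`. -/
noncomputable def inDeg (R : V → V → Prop) (v : V) : ℕ := {u | R u v}.ncard

/-- Out-degree of a vertex. -/
noncomputable def outDeg (R : V → V → Prop) (v : V) : ℕ := {w | R v w}.ncard

/-- A phylogenetic network: an acyclic digraph with a unique root of indegree 0 and
outdegree 2, in which every vertex is the root, a split vertex (indeg 1, outdeg 2),
a recombination vertex (indeg 2, outdeg 1) or a leaf (indeg 1, outdeg 0). -/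
def IsPhyloNet (R : V → V → Prop) : Prop :=
  (∀ v, ¬ Relation.TransGen R v v) ∧
  (∃! r, inDeg R r = 0) ∧
  (∀ v : V, (inDeg R v = 0 ∧ outDeg R v = 2) ∨ (inDeg R v = 1 ∧ outDeg R v = 2) ∨
    (inDeg R v = 2 ∧ outDeg R v = 1) ∨ (inDeg R v = 1 ∧ outDeg R v = 0))

/-- A leaf is a vertex of outdegree 0. -/
def IsLf (R : V → V → Prop) (v : V) : Prop := outDeg R v = 0

/-- The set of leaves of a network. -/
def netLeaves (R : V → V → Prop) : Set V := {v | IsLf R v}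

/-- `p` is a directed path (as a nonempty list of vertices) from `a` to `b`. -/
def IsPth (R : V → V → Prop) (p : List V) (a b : V) : Prop :=
  p ≠ [] ∧ p.head? = some a ∧ p.getLast? = some b ∧ p.Chain' R

/-- Internal vertices of a path. -/
def interior (p : List V) : List V := p.tail.dropLast

/-- Two paths are internally vertex-disjoint. -/
def IntDisj (p q : List V) : Prop :=
  (∀ v ∈ interior p, v ∉ q) ∧ (∀ v ∈ interior q, v ∉ p)

/-- The triplet xy|z is consistent with the network `R`: there are `u ≠ v` and pairwise
internally vertex-disjoint paths `u→x`, `u→y`, `v→u`, `v→z`. -/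
def ConsistentTrip (R : V → V → Prop) (x y z : V) : Prop :=
  ∃ u v : V, ∃ p1 p2 p3 p4 : List V, u ≠ v ∧
    IsPth R p1 u x ∧ IsPth R p2 u y ∧ IsPth R p3 v u ∧ IsPth R p4 v z ∧
    IntDisj p1 p2 ∧ IntDisj p1 p3 ∧ IntDisj p1 p4 ∧
    IntDisj p2 p3 ∧ IntDisj p2 p4 ∧ IntDisj p3 p4

/-- `(x,y,z) ∈ T` codes the rooted triplet xy|z; `trip T x y z` says xy|z ∈ T
(taking into account the symmetry xy|z = yx|z). -/
def trip (T : Set (V × V × V)) (x y z : V) : Prop := (x, y, z) ∈ T ∨ (y, x, z) ∈ T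

/-- The leaf set L(T) of a triplet set. -/
def tripLeaves (T : Set (V × V × V)) : Set V :=
  {a | ∃ t ∈ T, a = t.1 ∨ a = t.2.1 ∨ a = t.2.2}

/-- `T` is dense: every 3-element subset of L(T) supports at least one triplet of `T`. -/
def DenseT (T : Set (V × V × V)) : Prop :=
  ∀ x y z, x ∈ tripLeaves T → y ∈ tripLeaves T → z ∈ tripLeaves T →
    x ≠ y → x ≠ z → y ≠ z → trip T x y z ∨ trip T x z y ∨ trip T y z x

/-- An SN-set of `T`: a subset of L(T) closed under the operation
`S_T(X) = X ∪ {c | ∃ x y ∈ X, xc|y ∈ T}`. -/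
def IsSNSet (T : Set (V × V × V)) (Y : Set V) : Prop :=
  Y ⊆ tripLeaves T ∧
    ∀ ⦃c x y : V⦄, x ∈ Y → y ∈ Y → c ∈ tripLeaves T → trip T x c y → c ∈ Y

/-- `SN T X`: the closure of `X` under `S_T`, i.e. the smallest SN-superset of `X`. -/
def SN (T : Set (V × V × V)) (X : Set V) : Set V := ⋂₀ {Y | X ⊆ Y ∧ IsSNSet T Y}

/-- A maximal SN-set: a proper SN-set such that the only SN-set strictly containing
it is L(T) itself. -/
def MaxSN (T : Set (V × V × V)) (S : Set V) : Prop :=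
  IsSNSet T S ∧ S ≠ tripLeaves T ∧ ∀ Y, IsSNSet T Y → S ⊂ Y → Y = tripLeaves T

/-- A network is consistent with a triplet set if it is consistent with every triplet. -/
def ConsistentSet (R : V → V → Prop) (T : Set (V × V × V)) : Prop :=
  ∀ t ∈ T, ConsistentTrip R t.1 t.2.1 t.2.2

/-- A cut-arc: an arc whose removal disconnects the underlying undirected graph. -/
def CutArc (R : V → V → Prop) (u v : V) : Prop :=
  R u v ∧ ∃ a b : V, ¬ Relation.ReflTransGen
    (fun p q => (R p q ∨ R q p) ∧ ¬((p = u ∧ q = v) ∨ (p = v ∧ q = u))) a b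

/-- The set of leaves below the arc `(u,v)`: leaves reachable from `v`. -/
def leavesBelow (R : V → V → Prop) (u v : V) : Set V :=
  {ℓ | IsLf R ℓ ∧ Relation.ReflTransGen R v ℓ}

/-- A highest cut-arc: a cut-arc `(u,v)` such that there is no cut-arc `(u',v')`
with `u` reachable from `v'`. -/
def HighestCutArc (R : V → V → Prop) (u v : V) : Prop :=
  CutArc R u v ∧ ∀ u' v', CutArc R u' v' → ¬ Relation.ReflTransGen R v' u

/-- The subset `S` is connected in the underlying undirected graph. -/
def ConnOn (R : V → V → Prop) (S : Set V) : Prop :=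
  ∀ a ∈ S, ∀ b ∈ S,
    Relation.ReflTransGen (fun p q => p ∈ S ∧ q ∈ S ∧ (R p q ∨ R q p)) a b

/-- `S` induces a biconnected subgraph containing at least one arc. -/
def BiconnSet (R : V → V → Prop) (S : Set V) : Prop :=
  (∃ a ∈ S, ∃ b ∈ S, R a b) ∧ ConnOn R S ∧ ∀ w ∈ S, ConnOn R (S \ {w})

/-- A biconnected component: a maximal biconnected vertex set. -/
def IsBCC (R : V → V → Prop) (S : Set V) : Prop :=
  BiconnSet R S ∧ ∀ S', BiconnSet R S' → S ⊆ S' → S' = S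

/-- A level-k network: every biconnected component has at most `k` recombination
vertices. -/
def LevelK (k : ℕ) (R : V → V → Prop) : Prop :=
  ∀ S, IsBCC R S → ({v ∈ S | inDeg R v = 2}).ncard ≤ k

/-- A valid (non-redundant) network: every nontrivial biconnected component has at
least three outgoing arcs. -/
def GoodNet (R : V → V → Prop) : Prop :=
  IsPhyloNet R ∧ ∀ S, IsBCC R S → 3 ≤ S.ncard →
    3 ≤ {p : V × V | R p.1 p.2 ∧ p.1 ∈ S ∧ p.2 ∉ S}.ncard

end Phylo

section Aux
open Phylo Relation

variable {V : Type*}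

private lemma phylo_rtgSymm {S : V → V → Prop} (hs : ∀ a b, S a b → S b a) {a b : V}
    (h : ReflTransGen S a b) : ReflTransGen S b a := by
  induction h with
  | refl => exact .refl
  | tail _ h2 ih => exact ReflTransGen.head (hs _ _ h2) ih

private lemma phylo_pathRTG {R : V → V → Prop} :
    ∀ (p : List V) (a b : V), IsPth R p a b → ReflTransGen R a b
  | [], a, b, h => absurd rfl h.1
  | [w], a, b, h => by
      obtain ⟨-, h2, h3, -⟩ := h
      have ha : w = a := by simpa using h2
      have hb : w = b := by simpa using h3
      rw [← ha, ← hb]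
  | w :: w' :: rest, a, b, h => by
      obtain ⟨-, h2, h3, h4⟩ := h
      have ha : w = a := by simpa using h2
      simp only [List.Chain', List.isChain_cons_cons] at h4
      rw [List.getLast?_cons_cons] at h3
      have ih := phylo_pathRTG (w' :: rest) w' b ⟨List.cons_ne_nil _ _, rfl, h3, h4.2⟩
      exact ha ▸ ReflTransGen.head h4.1 ih

private lemma phylo_crossMem {R : V → V → Prop} {u v : V}
    (harc : ∀ p q, R p q → ¬ ReflTransGen R v p → ReflTransGen R v q → p = u) :
    ∀ (p : List V) (a b : V), IsPth R p a b → ¬ ReflTransGen R v a →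
      ReflTransGen R v b → u ∈ p
  | [], a, b, h, _, _ => absurd rfl h.1
  | [w], a, b, h, ha, hb => by
      obtain ⟨-, h2, h3, -⟩ := h
      have hwa : w = a := by simpa using h2
      have hwb : w = b := by simpa using h3
      exact absurd (hwa ▸ hwb ▸ hb) ha
  | w :: w' :: rest, a, b, h, ha, hb => by
      obtain ⟨-, h2, h3, h4⟩ := h
      have hwa : w = a := by simpa using h2
      simp only [List.Chain', List.isChain_cons_cons] at h4
      rw [List.getLast?_cons_cons] at h3
      by_cases hw' : ReflTransGen R v w'
      · have : w = u := harc w w' h4.1 (hwa ▸ ha) hw'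
        rw [← this]; exact List.mem_cons_self
      · have ih := phylo_crossMem harc (w' :: rest) w' b
          ⟨List.cons_ne_nil _ _, rfl, h3, h4.2⟩ hw' hb
        exact List.mem_cons_of_mem _ ih

private lemma phylo_mem_dropLast {l : List V} {u b : V} (hu : u ∈ l)
    (hb : l.getLast? = some b) (hub : u ≠ b) : u ∈ l.dropLast := by
  have hl : l ≠ [] := List.ne_nil_of_mem hu
  have hlast : l.getLast hl = b := by
    rw [List.getLast?_eq_getLast hl] at hb; exact Option.some.inj hb
  have heq := List.dropLast_append_getLast hl
  rw [← heq] at hu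
  rcases List.mem_append.mp hu with h | h
  · exact h
  · simp only [List.mem_singleton] at h
    exact absurd (h.trans hlast) hub

private lemma phylo_memInterior {R : V → V → Prop} {p : List V} {a b u : V}
    (h : IsPth R p a b) (hu : u ∈ p) (hub : u ≠ b) : u = a ∨ u ∈ interior p := by
  obtain ⟨hne, hh, hl, -⟩ := h
  match p, hne, hu with
  | w :: tl, _, hu =>
    have hwa : w = a := by simpa using hh
    rcases List.mem_cons.mp hu with h1 | h2
    · exact Or.inl (h1.trans hwa)
    · right
      match tl, h2 with
      | t :: ts, h2 =>
        rw [List.getLast?_cons_cons] at hl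
        exact phylo_mem_dropLast h2 hl hub

private lemma phylo_consSymm {R : V → V → Prop} {x y z : V}
    (h : ConsistentTrip R x y z) : ConsistentTrip R y x z := by
  obtain ⟨u0, v0, p1, p2, p3, p4, hne, h1, h2, h3, h4, d12, d13, d14, d23, d24, d34⟩ := h
  exact ⟨u0, v0, p2, p1, p3, p4, hne, h2, h1, h3, h4, ⟨d12.2, d12.1⟩, d23, d24, d13, d14, d34⟩

private lemma phylo_arcIntoB {V : Type*} [Fintype V] {R : V → V → Prop} {u v : V}
    (hnet : IsPhyloNet R) (hcut : CutArc R u v) :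
    ∀ p q, R p q → ¬ ReflTransGen R v p → ReflTransGen R v q → p = u := by
  classical
  obtain ⟨hacyc, hroot, -⟩ := hnet
  obtain ⟨r, hr0, hru⟩ := hroot
  obtain ⟨huv, a0, b0, hab⟩ := hcut
  intro p q hpq hp hq
  by_contra hne
  set R' : V → V → Prop :=
    fun s t => (R s t ∨ R t s) ∧ ¬((s = u ∧ t = v) ∨ (s = v ∧ t = u)) with hR'
  have hsym : ∀ s t, R' s t → R' t s := by
    intro s t h
    refine ⟨h.1.symm, fun hc => h.2 ?_⟩
    tauto
  have hu_notB : ¬ ReflTransGen R v u := fun h => hacyc v (TransGen.tail' h huv)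
  -- well-foundedness of R
  haveI : IsTrans V (TransGen R) := ⟨fun _ _ _ h1 h2 => h1.trans h2⟩
  haveI : IsIrrefl V (TransGen R) := ⟨hacyc⟩
  have hwfR : WellFounded R :=
    Subrelation.wf (fun h => TransGen.single h)
      (Finite.wellFounded_of_trans_of_irrefl (TransGen R))
  have exPred : ∀ w, inDeg R w ≠ 0 → ∃ s, R s w := by
    intro w h
    exact Set.nonempty_of_ncard_ne_zero h
  -- C1 : everything below v connected to v avoiding the arc
  have C1 : ∀ w, ReflTransGen R v w → ReflTransGen R' v w := by
    intro w hw
    induction hw with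
    | refl => exact .refl
    | @tail b c h1 h2 ih =>
        refine ih.tail ⟨Or.inl h2, ?_⟩
        rintro (⟨hb, hc⟩ | ⟨hb, hc⟩)
        · exact hu_notB (hb ▸ h1)
        · exact hu_notB (ReflTransGen.single (hb ▸ hc ▸ h2))
  -- C2 : everything not below v connected to the root avoiding the arc
  have C2 : ∀ w, ¬ ReflTransGen R v w → ReflTransGen R' r w := by
    intro w
    refine hwfR.induction
      (C := fun w => ¬ ReflTransGen R v w → ReflTransGen R' r w) w ?_
    intro x IH hx
    by_cases h0 : inDeg R x = 0
    · rw [hru x h0]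
    · obtain ⟨s, hs⟩ := exPred x h0
      have hsB : ¬ ReflTransGen R v s := fun h => hx (h.tail hs)
      refine (IH s hs hsB).tail ⟨Or.inl hs, ?_⟩
      rintro (⟨h1, h2⟩ | ⟨h1, h2⟩)
      · exact hx (h2 ▸ ReflTransGen.refl)
      · exact hsB (h1 ▸ ReflTransGen.refl)
  have hconn : ∀ w, ReflTransGen R' r w := by
    intro w
    by_cases hw : ReflTransGen R v w
    · have h2 : R' p q := by
        refine ⟨Or.inl hpq, ?_⟩
        rintro (⟨h1, -⟩ | ⟨h1, -⟩)
        · exact hne h1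
        · exact hp (h1 ▸ ReflTransGen.refl)
      have hrv : ReflTransGen R' r v :=
        ((C2 p hp).tail h2).trans (phylo_rtgSymm hsym (C1 q hq))
      exact hrv.trans (C1 w hw)
    · exact C2 w hw
  exact hab ((phylo_rtgSymm hsym (hconn a0)).trans (hconn b0))

private lemma phylo_key {V : Type*} {R : V → V → Prop} {u v x c y : V}
    (hacyc : ∀ w, ¬ TransGen R w w) (huv : R u v)
    (harc : ∀ p q, R p q → ¬ ReflTransGen R v p → ReflTransGen R v q → p = u)
    (hct : ConsistentTrip R x c y)
    (hx : ReflTransGen R v x) (hy : ReflTransGen R v y) :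
    ReflTransGen R v c := by
  obtain ⟨u0, v0, p1, p2, p3, p4, hne, h1, h2, h3, h4, d12, d13, d14, d23, d24, d34⟩ := hct
  by_cases hu0 : ReflTransGen R v u0
  · exact hu0.trans (phylo_pathRTG p2 u0 c h2)
  · exfalso
    have hv0 : ¬ ReflTransGen R v v0 :=
      fun h => hu0 (h.trans (phylo_pathRTG p3 v0 u0 h3))
    have hu_notB : ¬ ReflTransGen R v u := fun h => hacyc v (TransGen.tail' h huv)
    have hmem1 : u ∈ p1 := phylo_crossMem harc p1 u0 x h1 hu0 hx
    have hmem4 : u ∈ p4 := phylo_crossMem harc p4 v0 y h4 hv0 hy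
    have hux : u ≠ x := fun h => hu_notB (h ▸ hx)
    have huy : u ≠ y := fun h => hu_notB (h ▸ hy)
    rcases phylo_memInterior h1 hmem1 hux with hua | hint1
    · rcases phylo_memInterior h4 hmem4 huy with hub | hint4
      · exact hne (hua.symm.trans hub)
      · exact d14.2 u hint4 hmem1
    · exact d14.1 u hint1 hmem4

end Aux

open Phylo in
/-- If the network `R` is consistent with the dense triplet set `T`
(with `L(N) = L(T)`), then for each cut-arc `(u,v)` of `R`, the set of leaves below
it is an SN-set of `T`. -/
theorem stmt3 {V : Type*} [Fintype V] (R : V → V → Prop) (T : Set (V × V × V))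
    (hnet : IsPhyloNet R) (hdense : DenseT T) (hcons : ConsistentSet R T)
    (hL : netLeaves R = tripLeaves T) (u v : V) (hcut : CutArc R u v) :
    IsSNSet T (leavesBelow R u v) := by
  constructor
  · intro ℓ hℓ
    rw [← hL]
    exact hℓ.1
  · intro c x y hx hy hcT ht
    have hcleaf : IsLf R c := by
      rw [← hL] at hcT
      exact hcT
    refine ⟨hcleaf, ?_⟩
    have hct : ConsistentTrip R x c y := by
      rcases ht with h | h
      · exact hcons _ h
      · exact phylo_consSymm (hcons _ h)
    exact phylo_key hnet.1 hcut.1 (phylo_arcIntoB hnet hcut) hct hx.2 hy.2
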